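/- Let (Ω, ℱ, P) be a probability space, let T, L, U : Ω → ℝ be random variables with L < U almost surely and T independent of the pair (L, U), and let X = max(L, min(T, U)). Fix t ∈ ℝ and set A = 1{U ≥ t > L} and Y = 1{X ≥ t > L}. Let G : Ω → ℝ be an integrable random variable satisfying the calibration moment condition E[A·(Y − G)] = 0, and assume E[A] > 0. Then E[A·G] / E[A] = P(T ≥ t). That is, the population-level marginalized imputed risk equals the true survival rate S(t), regardless of whether G arises from a correctly specified imputation model. -/

import Mathlib

open MeasureTheory ProbabilityTheory

/-- Under double censoring with `T` independent of `(L, U)` and `L < U` a.s.,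
if the imputed risk `G` satisfies the calibration moment condition `E[A·(Y − G)] = 0`
with `A = 1{U ≥ t > L}`, `Y = 1{X ≥ t > L}`, and `E[A] > 0`, then
`E[A·G] / E[A] = P(T ≥ t)`. -/
theorem stmt_2 {Ω : Type*} [MeasurableSpace Ω] (P : Measure Ω) [IsProbabilityMeasure P]
    (T L U : Ω → ℝ) (hT : Measurable T) (hL : Measurable L) (hU : Measurable U)
    (hLU : ∀ᵐ ω ∂P, L ω < U ω)
    (hindep : IndepFun T (fun ω => (L ω, U ω)) P)
    (X : Ω → ℝ) (hX : ∀ ω, X ω = max (L ω) (min (T ω) (U ω))) (t : ℝ)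
    (A Y : Ω → ℝ)
    (hA : ∀ ω, A ω = if U ω ≥ t ∧ t > L ω then 1 else 0)
    (hY : ∀ ω, Y ω = if X ω ≥ t ∧ t > L ω then 1 else 0)
    (G : Ω → ℝ) (hGmeas : Measurable G) (hGint : Integrable G P)
    (hcal : ∫ ω, A ω * (Y ω - G ω) ∂P = 0)
    (hpos : 0 < ∫ ω, A ω ∂P) :
    (∫ ω, A ω * G ω ∂P) / (∫ ω, A ω ∂P) = (P {ω | T ω ≥ t}).toReal := by
  classical
  set f : Ω → ℝ := fun ω => if T ω ≥ t then 1 else 0 with hf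
  set φ : ℝ → ℝ := fun x => if x ≥ t then 1 else 0 with hφ
  set ψ : ℝ × ℝ → ℝ := fun p => if p.2 ≥ t ∧ t > p.1 then 1 else 0 with hψ
  have hφm : Measurable φ := by
    apply Measurable.ite _ measurable_const measurable_const
    exact measurableSet_le measurable_const measurable_id
  have hψm : Measurable ψ := by
    apply Measurable.ite _ measurable_const measurable_const
    exact (measurableSet_le measurable_const measurable_snd).inter
      (measurableSet_lt measurable_fst measurable_const)
  have hAeq : A = ψ ∘ (fun ω => (L ω, U ω)) := by
    funext ω; simp [hA, hψ]
  have hfeq : f = φ ∘ T := by funext ω; simp [hf, hφ]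
  have hAm : Measurable A := by rw [hAeq]; exact hψm.comp (hL.prodMk hU)
  have hfm : Measurable f := by rw [hfeq]; exact hφm.comp hT
  have hAbd : ∀ ω, ‖A ω‖ ≤ 1 := by
    intro ω; rw [hA]; split <;> simp
  have hfbd : ∀ ω, ‖f ω‖ ≤ 1 := by
    intro ω; simp only [hf]; split <;> simp
  have hAint : Integrable A P :=
    (integrable_const (1:ℝ)).mono' hAm.aestronglyMeasurable
      (Filter.Eventually.of_forall hAbd)
  have hfint : Integrable f P :=
    (integrable_const (1:ℝ)).mono' hfm.aestronglyMeasurable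
      (Filter.Eventually.of_forall hfbd)
  -- A * Y = A * f pointwise
  have hAY : ∀ ω, A ω * Y ω = A ω * f ω := by
    intro ω
    rw [hA, hY]
    by_cases h : U ω ≥ t ∧ t > L ω
    · rw [if_pos h, one_mul, one_mul]
      show (if X ω ≥ t ∧ t > L ω then (1:ℝ) else 0) = if T ω ≥ t then 1 else 0
      have hiff : (X ω ≥ t ∧ t > L ω) ↔ T ω ≥ t := by
        rw [hX]
        constructor
        · rintro ⟨hx, -⟩
          rcases le_max_iff.mp hx with h1 | h1
          · exact absurd h1 (not_le.mpr h.2)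
          · exact (le_min_iff.mp h1).1
        · intro ht
          exact ⟨le_max_of_le_right (le_min ht h.1), h.2⟩
      by_cases h2 : T ω ≥ t
      · rw [if_pos (hiff.mpr h2), if_pos h2]
      · rw [if_neg (fun hh => h2 (hiff.mp hh)), if_neg h2]
    · simp [h]
  -- independence of f and A
  have hindAf : IndepFun A f P := by
    rw [hfeq, hAeq]
    exact (hindep.comp hφm hψm).symm
  have hAGint : Integrable (fun ω => A ω * G ω) P :=
    hGint.bdd_mul hAm.aestronglyMeasurable (Filter.Eventually.of_forall hAbd)
  have hAfint : Integrable (fun ω => A ω * f ω) P :=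
    hfint.bdd_mul hAm.aestronglyMeasurable (Filter.Eventually.of_forall hAbd)
  have hAYint : Integrable (fun ω => A ω * Y ω) P := by
    refine hAfint.congr (Filter.Eventually.of_forall fun ω => (hAY ω).symm)
  -- split the calibration integral
  have hsplit : ∫ ω, A ω * (Y ω - G ω) ∂P
      = (∫ ω, A ω * Y ω ∂P) - ∫ ω, A ω * G ω ∂P := by
    simp_rw [mul_sub]
    exact integral_sub hAYint hAGint
  have hAGeq : ∫ ω, A ω * G ω ∂P = ∫ ω, A ω * f ω ∂P := by
    have h1 : ∫ ω, A ω * Y ω ∂P = ∫ ω, A ω * G ω ∂P := by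
      have := hsplit; rw [hcal] at this; linarith
    rw [← h1]
    exact integral_congr_ae (Filter.Eventually.of_forall hAY)
  -- indep: ∫ A f = ∫ A * ∫ f
  have hmul : ∫ ω, A ω * f ω ∂P = (∫ ω, A ω ∂P) * ∫ ω, f ω ∂P :=
    hindAf.integral_mul_eq_mul_integral hAint.aestronglyMeasurable hfint.aestronglyMeasurable
  -- ∫ f = P(T ≥ t)
  have hfint_eq : ∫ ω, f ω ∂P = (P {ω | T ω ≥ t}).toReal := by
    have hmeas : MeasurableSet {ω | T ω ≥ t} := hT measurableSet_Ici
    have : f = Set.indicator {ω | T ω ≥ t} (fun _ => (1:ℝ)) := by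
      funext ω
      by_cases h : T ω ≥ t
      · simp [hf, h, Set.indicator_of_mem, Set.mem_setOf_eq]
      · simp [hf, h, Set.indicator_of_notMem, Set.mem_setOf_eq]
    rw [this, integral_indicator hmeas]
    simp [Measure.restrict_apply_univ, measureReal_def]
  rw [hAGeq, hmul, hfint_eq]
  exact mul_div_cancel_left₀ _ (ne_of_gt hpos)
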